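/- The map F(u,v) = (u(u-1), v, u^2(u-1)) is injective on the sphere S = {(u,v) ∈ C^2 : |u|^2 + |v|^2 = 4}. -/
import Mathlib


noncomputable def F : ℂ × ℂ → ℂ × ℂ × ℂ := fun p => (p.1 * (p.1 - 1), p.2, p.1 ^ 2 * (p.1 - 1))

theorem stmt_4 :
    Set.InjOn F {p : ℂ × ℂ | ‖p.1‖ ^ 2 + ‖p.2‖ ^ 2 = 4} := by
  rintro ⟨u, v⟩ hp ⟨u', v'⟩ hq h
  simp only [F, Prod.mk.injEq] at h
  obtain ⟨h1, h2, h3⟩ := h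
  simp only [Set.mem_setOf_eq] at hp hq
  subst h2
  suffices hu : u = u' by simp [hu]
  by_cases hc : u * (u - 1) = 0
  · have hc' : u' * (u' - 1) = 0 := h1 ▸ hc
    have hn : ‖u‖ = ‖u'‖ := by
      have := hp.trans hq.symm
      nlinarith [norm_nonneg u, norm_nonneg u']
    rcases mul_eq_zero.1 hc with h0 | h0 <;> rcases mul_eq_zero.1 hc' with h0' | h0' <;>
      [skip; skip; skip; skip] <;>
      first
      | (rw [h0, sub_eq_zero.1 h0']  at hn ⊢ <;> simp_all)
      | (have := sub_eq_zero.1 h0; have := sub_eq_zero.1 h0'; simp_all)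
      | simp_all
  · have : u * (u * (u - 1)) = u' * (u * (u - 1)) := by
      linear_combination h3 - u' * h1
    exact mul_right_cancel₀ hc this
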